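/- If all K anticlusters in a partition of X ⊆ ℝ^D have the same size n (so |X| = Kn), then the anticlustering objective ∑_k ∑_{i<i', i,i'∈C_k} ‖x_i − x_{i'}‖² equals n·∑_{x∈X} ‖x − μ‖² − n·∑_{k=1}^K n‖μ_k − μ‖², where μ is the global centroid and μ_k are the anticluster centroids. Hence, for equal-sized anticlusters, maximizing the within-anticluster diversity is equivalent to minimizing ∑_k ‖μ_k − μ‖². -/

import Mathlib

open Finset

/-- Sum of squared distances over unordered pairs within a finset of indices. -/
noncomputable def withinSum {N D : ℕ} (x : Fin N → EuclideanSpace ℝ (Fin D))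
    (s : Finset (Fin N)) : ℝ :=
  ∑ i ∈ s, ∑ j ∈ s.filter (fun j => i < j), ‖x i - x j‖ ^ 2

lemma double_sum_eq {N D : ℕ} (x : Fin N → EuclideanSpace ℝ (Fin D))
    (s : Finset (Fin N)) :
    ∑ i ∈ s, ∑ j ∈ s, ‖x i - x j‖ ^ 2 = 2 * withinSum x s := by
  have hsplit : ∀ i ∈ s, ∑ j ∈ s, ‖x i - x j‖ ^ 2
      = ∑ j ∈ s.filter (fun j => i < j), ‖x i - x j‖ ^ 2
        + ∑ j ∈ s.filter (fun j => j < i), ‖x i - x j‖ ^ 2 := by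
    intro i hi
    rw [← Finset.sum_filter_add_sum_filter_not s (fun j => i < j)]
    congr 1
    have : s.filter (fun j => ¬ i < j) = insert i (s.filter (fun j => j < i)) := by
      ext j
      simp only [Finset.mem_filter, Finset.mem_insert, not_lt]
      constructor
      · rintro ⟨hj, hle⟩
        rcases lt_or_eq_of_le hle with h | h
        · exact Or.inr ⟨hj, h⟩
        · exact Or.inl h
      · rintro (rfl | ⟨hj, hlt⟩)
        · exact ⟨hi, le_refl _⟩
        · exact ⟨hj, le_of_lt hlt⟩
    rw [this, Finset.sum_insert (by simp)]
    simp
  rw [Finset.sum_congr rfl hsplit, Finset.sum_add_distrib]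
  have key : ∑ i ∈ s, ∑ j ∈ s.filter (fun j => j < i), ‖x i - x j‖ ^ 2
      = ∑ i ∈ s, ∑ j ∈ s.filter (fun j => i < j), ‖x i - x j‖ ^ 2 := by
    simp_rw [Finset.sum_filter]
    rw [Finset.sum_comm]
    refine Finset.sum_congr rfl fun i _ => Finset.sum_congr rfl fun j _ => ?_
    rw [norm_sub_rev]
  rw [key, withinSum]; ring

lemma sum_sq_dist_centroid {N D : ℕ} (x : Fin N → EuclideanSpace ℝ (Fin D))
    (s : Finset (Fin N)) (n : ℕ) (hn : 0 < n) (hs : s.card = n)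
    (c : EuclideanSpace ℝ (Fin D)) (hc : c = (n : ℝ)⁻¹ • ∑ i ∈ s, x i) :
    withinSum x s = (n : ℝ) * ∑ i ∈ s, ‖x i - c‖ ^ 2 := by
  have hn' : (n : ℝ) ≠ 0 := Nat.cast_ne_zero.mpr hn.ne'
  have hS : ∑ i ∈ s, x i = (n : ℝ) • c := by
    rw [hc, smul_smul, mul_inv_cancel₀ hn', one_smul]
  have h2 : 2 * withinSum x s = ∑ i ∈ s, ∑ j ∈ s, ‖x i - x j‖ ^ 2 :=
    (double_sum_eq x s).symm
  have expand : ∀ a b : EuclideanSpace ℝ (Fin D),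
      ‖a - b‖ ^ 2 = ‖a‖ ^ 2 - 2 * inner ℝ a b + ‖b‖ ^ 2 := fun a b =>
    norm_sub_sq_real a b
  have hdouble : ∑ i ∈ s, ∑ j ∈ s, ‖x i - x j‖ ^ 2
      = 2 * (n : ℝ) * ∑ i ∈ s, ‖x i‖ ^ 2 - 2 * ((n : ℝ) ^ 2 * ‖c‖ ^ 2) := by
    simp only [expand, Finset.sum_add_distrib, Finset.sum_sub_distrib, Finset.sum_const,
      hs, nsmul_eq_mul, ← Finset.mul_sum, ← Finset.sum_mul, ← inner_sum, ← sum_inner, hS,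
      real_inner_smul_left, real_inner_smul_right, real_inner_self_eq_norm_sq]
    ring
  have hright : ∑ i ∈ s, ‖x i - c‖ ^ 2
      = ∑ i ∈ s, ‖x i‖ ^ 2 - (n : ℝ) * ‖c‖ ^ 2 := by
    simp only [expand, Finset.sum_add_distrib, Finset.sum_sub_distrib, Finset.sum_const,
      hs, nsmul_eq_mul, ← Finset.mul_sum, ← sum_inner, hS, real_inner_smul_left,
      real_inner_self_eq_norm_sq]
    ring
  have := h2
  rw [hdouble] at this
  rw [hright]
  nlinarith [this]

lemma sum_sq_dist_shift {N D : ℕ} (x : Fin N → EuclideanSpace ℝ (Fin D))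
    (s : Finset (Fin N)) (n : ℕ) (hn : 0 < n) (hs : s.card = n)
    (c : EuclideanSpace ℝ (Fin D)) (hc : c = (n : ℝ)⁻¹ • ∑ i ∈ s, x i)
    (μ : EuclideanSpace ℝ (Fin D)) :
    ∑ i ∈ s, ‖x i - μ‖ ^ 2 = ∑ i ∈ s, ‖x i - c‖ ^ 2 + (n : ℝ) * ‖c - μ‖ ^ 2 := by
  have hn' : (n : ℝ) ≠ 0 := Nat.cast_ne_zero.mpr hn.ne'
  have hS : ∑ i ∈ s, x i = (n : ℝ) • c := by
    rw [hc, smul_smul, mul_inv_cancel₀ hn', one_smul]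
  have expand : ∀ i, x i - μ = (x i - c) + (c - μ) := fun i => by abel
  have hsum : ∑ i ∈ s, (x i - c) = 0 := by
    rw [Finset.sum_sub_distrib, hS, Finset.sum_const, hs, ← Nat.cast_smul_eq_nsmul ℝ n c, sub_self]
  calc ∑ i ∈ s, ‖x i - μ‖ ^ 2
      = ∑ i ∈ s, (‖x i - c‖ ^ 2 + 2 * inner ℝ (x i - c) (c - μ) + ‖c - μ‖ ^ 2) := by
        refine Finset.sum_congr rfl fun i _ => ?_
        rw [expand i, norm_add_sq_real]
    _ = ∑ i ∈ s, ‖x i - c‖ ^ 2 + (n : ℝ) * ‖c - μ‖ ^ 2 := by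
        rw [Finset.sum_add_distrib, Finset.sum_add_distrib, ← Finset.mul_sum,
          ← sum_inner, hsum]
        simp [hs]

lemma partition_sum {N K : ℕ} (P : Fin K → Finset (Fin N))
    (hdisj : ∀ k k', k ≠ k' → Disjoint (P k) (P k'))
    (hcover : ∀ i, ∃ k, i ∈ P k) (f : Fin N → ℝ) :
    ∑ i, f i = ∑ k, ∑ i ∈ P k, f i := by
  have huniv : Finset.univ.biUnion P = Finset.univ := by
    ext i
    simp only [Finset.mem_biUnion, Finset.mem_univ, iff_true]
    obtain ⟨k, hk⟩ := hcover i
    exact ⟨k, trivial, hk⟩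
  rw [← huniv, Finset.sum_biUnion]
  intro k _ k' _ hkk'
  exact hdisj k k' hkk'

theorem equal_size_anticlustering_objective
    (D K n : ℕ) (hK : 0 < K) (hn : 0 < n)
    (x : Fin (K * n) → EuclideanSpace ℝ (Fin D))
    (μ : EuclideanSpace ℝ (Fin D)) (hμ : μ = ((K * n : ℕ) : ℝ)⁻¹ • ∑ i, x i)
    (P : Fin K → Finset (Fin (K * n)))
    (hPdisj : ∀ k k', k ≠ k' → Disjoint (P k) (P k'))
    (hPcover : ∀ i, ∃ k, i ∈ P k)
    (hPcard : ∀ k, (P k).card = n)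
    (μP : Fin K → EuclideanSpace ℝ (Fin D))
    (hμP : ∀ k, μP k = (n : ℝ)⁻¹ • ∑ i ∈ P k, x i) :
    (∑ k, withinSum x (P k)
      = (n : ℝ) * ∑ i, ‖x i - μ‖ ^ 2 - (n : ℝ) * ∑ k, (n : ℝ) * ‖μP k - μ‖ ^ 2) ∧
    (∀ Q : Fin K → Finset (Fin (K * n)),
      (∀ k k', k ≠ k' → Disjoint (Q k) (Q k')) →
      (∀ i, ∃ k, i ∈ Q k) →
      (∀ k, (Q k).card = n) →
      ∀ μQ : Fin K → EuclideanSpace ℝ (Fin D),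
        (∀ k, μQ k = (n : ℝ)⁻¹ • ∑ i ∈ Q k, x i) →
        ((∑ k, withinSum x (Q k) ≤ ∑ k, withinSum x (P k)) ↔
          (∑ k, ‖μP k - μ‖ ^ 2 ≤ ∑ k, ‖μQ k - μ‖ ^ 2))) := by
  have key : ∀ (Q : Fin K → Finset (Fin (K * n))),
      (∀ k k', k ≠ k' → Disjoint (Q k) (Q k')) →
      (∀ i, ∃ k, i ∈ Q k) →
      (∀ k, (Q k).card = n) →
      ∀ μQ : Fin K → EuclideanSpace ℝ (Fin D),
        (∀ k, μQ k = (n : ℝ)⁻¹ • ∑ i ∈ Q k, x i) →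
        ∑ k, withinSum x (Q k)
          = (n : ℝ) * ∑ i, ‖x i - μ‖ ^ 2 - (n : ℝ) * ∑ k, (n : ℝ) * ‖μQ k - μ‖ ^ 2 := by
    intro Q hdisj hcover hcard μQ hμQ
    have hpart : ∑ i, ‖x i - μ‖ ^ 2 = ∑ k, ∑ i ∈ Q k, ‖x i - μ‖ ^ 2 :=
      partition_sum Q hdisj hcover _
    have hterm : ∀ k, withinSum x (Q k)
        = (n : ℝ) * ∑ i ∈ Q k, ‖x i - μ‖ ^ 2 - (n : ℝ) * ((n : ℝ) * ‖μQ k - μ‖ ^ 2) := by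
      intro k
      rw [sum_sq_dist_centroid x (Q k) n hn (hcard k) (μQ k) (hμQ k),
        sum_sq_dist_shift x (Q k) n hn (hcard k) (μQ k) (hμQ k) μ]
      ring
    rw [Finset.sum_congr rfl fun k _ => hterm k, Finset.sum_sub_distrib,
      ← Finset.mul_sum, ← Finset.mul_sum, hpart]
  have hP := key P hPdisj hPcover hPcard μP hμP
  refine ⟨hP, fun Q hQd hQc hQcard μQ hμQ => ?_⟩
  rw [key Q hQd hQc hQcard μQ hμQ, hP]
  have hnpos : (0 : ℝ) < n := Nat.cast_pos.mpr hn
  simp_rw [← Finset.mul_sum]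
  rw [sub_le_sub_iff_left, mul_le_mul_iff_right₀ hnpos, mul_le_mul_iff_right₀ hnpos]
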